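/- Let B and T be finite index sets, let w and p assign to each index a positive integer weight and a positive integer profit, and let c : B → ℕ. Suppose that for every j ∈ B and every i ∈ T we have p_j·w_i ≥ p_i·w_j (every index in B has efficiency at least that of every index in T), and suppose Σ_{j∈B} c_j·w_j = Σ_{i∈T} w_i. Then Σ_{j∈B} c_j·p_j ≥ Σ_{i∈T} p_i. -/
import Mathlib

open Finset in
/-- **Exchange lemma.** Let `B` and `T` be finite sets of items with positive
integer weights `w` and profits `p`, and `c : B → ℕ`.  If every item of `B` is
at least as efficient as every item of `T` (`p j / w j ≥ p i / w i`, written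
multiplicatively) and `∑_{j ∈ B} c j ⬝ w j = ∑_{i ∈ T} w i`, then
`∑_{j ∈ B} c j ⬝ p j ≥ ∑_{i ∈ T} p i`. -/
theorem knapsack_exchange
    {ι : Type*} (B T : Finset ι) (w p : ι → ℕ) (c : ι → ℕ)
    (hw : ∀ i, 1 ≤ w i) (hp : ∀ i, 1 ≤ p i)
    (heff : ∀ j ∈ B, ∀ i ∈ T, p j * w i ≥ p i * w j)
    (hweight : ∑ j ∈ B, c j * w j = ∑ i ∈ T, w i) :
    ∑ j ∈ B, c j * p j ≥ ∑ i ∈ T, p i := by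
  rcases T.eq_empty_or_nonempty with rfl | hT
  · simp
  have hWpos : 0 < ∑ i ∈ T, w i :=
    Finset.sum_pos (fun i _ => hw i) hT
  have key : (∑ j ∈ B, c j * p j) * (∑ i ∈ T, w i)
      ≥ (∑ i ∈ T, p i) * (∑ i ∈ T, w i) := by
    calc (∑ j ∈ B, c j * p j) * (∑ i ∈ T, w i)
        = ∑ j ∈ B, ∑ i ∈ T, c j * (p j * w i) := by
          rw [Finset.sum_mul]
          exact Finset.sum_congr rfl fun j _ => by
            rw [Finset.mul_sum]; exact Finset.sum_congr rfl fun i _ => by ring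
      _ ≥ ∑ j ∈ B, ∑ i ∈ T, c j * (p i * w j) := by
          refine Finset.sum_le_sum fun j hj => Finset.sum_le_sum fun i hi => ?_
          exact Nat.mul_le_mul_left _ (heff j hj i hi)
      _ = (∑ i ∈ T, p i) * (∑ j ∈ B, c j * w j) := by
          rw [Finset.sum_comm, Finset.sum_mul]
          exact Finset.sum_congr rfl fun i _ => by
            rw [Finset.mul_sum]; exact Finset.sum_congr rfl fun j _ => by ring
      _ = (∑ i ∈ T, p i) * (∑ i ∈ T, w i) := by rw [hweight]
  exact Nat.le_of_mul_le_mul_right key hWpos
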